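/- Let n ≥ 1, q > 0, b > 0, γ = b + 1/(p-1) where q = p/(p-1), p > 1, and let B(x) = (C - |x|^q)_+^{1/b} be the normalized Barenblatt profile with ∫B = 1. Then the weighted p-Fisher information I_b(B) = ((b+1)/(γ∫B^{b+1})) · ∫_{ℝⁿ} B^{-1/(p-1)}|∇B^γ|^p dx equals (qγ/b)^{p-1}·n. -/

import Mathlib

open MeasureTheory

open Set Real InnerProductSpace Metric


theorem grad_interior {E : Type*} [NormedAddCommGroup E] [InnerProductSpace ℝ E] [CompleteSpace E]
    (C q m : ℝ) (hq : 1 < q) (x : E) (hx : ‖x‖ ^ q < C) :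
    HasGradientAt (fun y : E => (max (C - ‖y‖ ^ q) 0) ^ m)
      ((-(m * (C - ‖x‖ ^ q) ^ (m - 1) * q * ‖x‖ ^ (q - 2))) • x) x := by
  have hcont : Continuous fun y : E => C - ‖y‖ ^ q :=
    continuous_const.sub (continuous_norm.rpow_const fun y => Or.inr (by positivity))
  have hpos : 0 < C - ‖x‖ ^ q := sub_pos.mpr hx
  have hev : (fun y : E => (C - ‖y‖ ^ q) ^ m) =ᶠ[nhds x]
      (fun y : E => (max (C - ‖y‖ ^ q) 0) ^ m) := by
    filter_upwards [continuousAt_const.eventually_lt hcont.continuousAt hpos] with y hy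
    rw [max_eq_left hy.le]
  have hd1 : HasFDerivAt (fun y : E => ‖y‖ ^ q) ((q * ‖x‖ ^ (q - 2)) • innerSL ℝ x) x :=
    hasFDerivAt_norm_rpow x hq
  have hd2 : HasFDerivAt (fun y : E => C - ‖y‖ ^ q)
      (-((q * ‖x‖ ^ (q - 2)) • innerSL ℝ x)) x := by
    have h := (hasFDerivAt_const C x).sub hd1; rwa [zero_sub] at h
  have hg : HasDerivAt (fun t : ℝ => t ^ m) (m * (C - ‖x‖ ^ q) ^ (m - 1)) (C - ‖x‖ ^ q) :=
    Real.hasDerivAt_rpow_const (Or.inl hpos.ne')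
  have hcomp : HasFDerivAt (fun y : E => (C - ‖y‖ ^ q) ^ m)
      ((m * (C - ‖x‖ ^ q) ^ (m - 1)) • (-((q * ‖x‖ ^ (q - 2)) • innerSL ℝ x))) x :=
    by have h := hg.comp_hasFDerivAt x hd2; exact h
  rw [hasGradientAt_iff_hasFDerivAt]
  have : (toDual ℝ E) ((-(m * (C - ‖x‖ ^ q) ^ (m - 1) * q * ‖x‖ ^ (q - 2))) • x)
      = (m * (C - ‖x‖ ^ q) ^ (m - 1)) • (-((q * ‖x‖ ^ (q - 2)) • innerSL ℝ x)) := by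
    ext y
    simp [toDual_apply_apply, inner_smul_left, real_inner_smul_left]
    ring
  rw [this]
  exact hcomp.congr_of_eventuallyEq hev.symm

theorem pointwise_eq {E : Type*} [NormedAddCommGroup E] [InnerProductSpace ℝ E] [CompleteSpace E]
    (p q b γ C : ℝ) (hp : 1 < p) (hq : q = p / (p - 1))
    (hb : 0 < b) (hγ : γ = b + 1 / (p - 1)) (x : E) :
    ((max (C - ‖x‖ ^ q) 0) ^ (1 / b)) ^ (-1 / (p - 1)) *
      ‖gradient (fun y : E => ((max (C - ‖y‖ ^ q) 0) ^ (1 / b)) ^ γ) x‖ ^ p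
    = (q * γ / b) ^ p * (‖x‖ ^ q * (max (C - ‖x‖ ^ q) 0) ^ (1 / b)) := by
  have hp1 : 0 < p - 1 := by linarith
  have hq1 : 1 < q := by rw [hq]; rw [lt_div_iff₀ hp1]; linarith
  have hq0 : 0 < q := lt_trans one_pos hq1
  have hγ0 : 0 < γ := by rw [hγ]; positivity
  set m : ℝ := 1 / b * γ with hm
  have hm1 : 1 < m := by
    rw [hm, hγ]; rw [show (1:ℝ)/b * (b + 1/(p-1)) = 1 + 1/(b*(p-1)) by field_simp]
    have : 0 < 1/(b*(p-1)) := by positivity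
    linarith
  have hm0 : 0 < m := lt_trans one_pos hm1
  have hfun : (fun y : E => ((max (C - ‖y‖ ^ q) 0) ^ (1 / b)) ^ γ)
      = fun y : E => (max (C - ‖y‖ ^ q) 0) ^ m := by
    funext y; rw [hm, Real.rpow_mul (le_max_right _ _)]
  rw [hfun]
  rcases le_or_gt C (‖x‖ ^ q) with hcase | hcase
  · rw [max_eq_right (by linarith)]
    rw [Real.zero_rpow (by positivity : (0:ℝ) < 1 / b).ne',
      Real.zero_rpow (div_ne_zero (neg_ne_zero.mpr one_ne_zero) hp1.ne'),
      zero_mul, mul_zero, mul_zero]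
  · have hpos : 0 < C - ‖x‖ ^ q := sub_pos.mpr hcase
    have hmax : max (C - ‖x‖ ^ q) 0 = C - ‖x‖ ^ q := max_eq_left hpos.le
    have hgrad := (grad_interior C q m hq1 x hcase).gradient
    rw [hgrad, hmax]
    set t : ℝ := C - ‖x‖ ^ q with ht
    rcases eq_or_ne x 0 with rfl | hx0
    · simp [Real.zero_rpow hq0.ne', Real.zero_rpow (by positivity : (0:ℝ) < p).ne']
    · have hxn : 0 < ‖x‖ := norm_pos_iff.mpr hx0
      rw [norm_smul, Real.norm_eq_abs, abs_neg,
        abs_of_nonneg (by positivity : 0 ≤ m * t ^ (m-1) * q * ‖x‖ ^ (q-2))]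
      have hcollect : m * t ^ (m - 1) * q * ‖x‖ ^ (q - 2) * ‖x‖
          = (m * q) * (‖x‖ ^ (q - 1) * t ^ (m - 1)) := by
        rw [show q - 1 = q - 2 + 1 by ring, Real.rpow_add_one hxn.ne']
        ring
      rw [hcollect, Real.mul_rpow (mul_nonneg hm0.le hq0.le) (by positivity),
        Real.mul_rpow (by positivity : (0:ℝ) ≤ ‖x‖ ^ (q-1)) (by positivity),
        ← Real.rpow_mul hxn.le, ← Real.rpow_mul hpos.le, ← Real.rpow_mul hpos.le]
      have hqp : (q - 1) * p = q := by
        rw [hq]; field_simp; ring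
      have hA : 1 / b * (-1 / (p - 1)) + (m - 1) * p = 1 / b := by
        rw [hm, hγ]; field_simp; ring
      have hK : q * γ / b = m * q := by rw [hm]; ring
      rw [hqp, hK]
      calc t ^ (1 / b * (-1 / (p - 1))) * ((m * q) ^ p * (‖x‖ ^ q * t ^ ((m - 1) * p)))
          = (m * q) ^ p * (‖x‖ ^ q * (t ^ (1 / b * (-1 / (p - 1))) * t ^ ((m - 1) * p))) := by
            ring
        _ = (m * q) ^ p * (‖x‖ ^ q * t ^ (1 / b)) := by
            rw [← Real.rpow_add hpos, hA]

section oneD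
variable (n : ℕ) (q b C : ℝ)

-- continuity of the basic pieces
theorem cont_pow (hq0 : 0 < q) : Continuous fun y : ℝ => y ^ q :=
  continuous_id.rpow_const fun y => Or.inr hq0.le

theorem cont_max (hq0 : 0 < q) {s : ℝ} (hs : 0 ≤ s) :
    Continuous fun y : ℝ => (max (C - y ^ q) 0) ^ s :=
  ((continuous_const.sub (cont_pow q hq0)).max continuous_const).rpow_const fun y => Or.inr hs

-- conversion Ioi → interval, integrand with extra factor g y (continuous, arbitrary)
theorem ioi_to_interval (hn : 1 ≤ n) (hq1 : 1 < q) (hC : 0 < C) {s : ℝ} (hs : 0 < s)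
    {g : ℝ → ℝ} (hg : Continuous g) :
    ∫ y in Ioi (0:ℝ), y ^ (n-1) * (g y * (max (C - y ^ q) 0) ^ s)
      = ∫ y in (0:ℝ)..(C ^ (1/q)), y ^ (n-1) * (g y * (C - y ^ q) ^ s) := by
  have hq0 : 0 < q := lt_trans one_pos hq1
  set R : ℝ := C ^ (1/q) with hRdef
  have hR : 0 < R := Real.rpow_pos_of_pos hC _
  have hRq : R ^ q = C := by
    rw [hRdef, ← Real.rpow_mul hC.le, one_div_mul_cancel hq0.ne', Real.rpow_one]
  have hvanish : ∀ y ∈ Ioi R, y ^ (n-1) * (g y * (max (C - y ^ q) 0) ^ s) = 0 := by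
    intro y hy
    have : C < y ^ q := by
      rw [← hRq]; exact Real.rpow_lt_rpow hR.le hy hq0
    rw [max_eq_right (by linarith), Real.zero_rpow hs.ne', mul_zero, mul_zero]
  have hcont : Continuous fun y : ℝ => y ^ (n-1) * (g y * (max (C - y ^ q) 0) ^ s) :=
    (continuous_pow _).mul (hg.mul (cont_max q C hq0 hs.le))
  rw [intervalIntegral.integral_of_le hR.le, ← Ioc_union_Ioi_eq_Ioi hR.le,
    setIntegral_union (Ioc_disjoint_Ioi le_rfl) measurableSet_Ioi
      (hcont.integrableOn_Ioc) ((integrableOn_congr_fun hvanish measurableSet_Ioi).mpr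
        (integrableOn_zero))]
  rw [setIntegral_congr_fun measurableSet_Ioi hvanish, integral_zero, add_zero]
  refine setIntegral_congr_fun measurableSet_Ioc fun y hy => ?_
  have hyq : y ^ q ≤ C := by
    rw [← hRq]; exact Real.rpow_le_rpow hy.1.le hy.2 hq0.le
  rw [max_eq_left (by linarith)]
end oneD

theorem ftc_id (n : ℕ) (q b C : ℝ) (hn : 1 ≤ n) (hq1 : 1 < q) (hb : 0 < b) (hC : 0 < C) :
    (n : ℝ) * ∫ r in (0:ℝ)..(C ^ (1/q)), r ^ (n-1) * ((1:ℝ) * (C - r ^ q) ^ (1/b + 1))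
      = (q * (1/b + 1)) * ∫ r in (0:ℝ)..(C ^ (1/q)), r ^ (n-1) * (r ^ q * (C - r ^ q) ^ (1/b)) := by
  have hq0 : 0 < q := lt_trans one_pos hq1
  set R : ℝ := C ^ (1/q) with hRdef
  have hR : 0 < R := Real.rpow_pos_of_pos hC _
  have hRq : R ^ q = C := by
    rw [hRdef, ← Real.rpow_mul hC.le, one_div_mul_cancel hq0.ne', Real.rpow_one]
  have hb1 : (0:ℝ) < 1/b := by positivity
  set G : ℝ → ℝ := fun r => (n:ℝ) * (r ^ (n-1) * ((1:ℝ) * (C - r ^ q) ^ (1/b + 1)))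
      - (q * (1/b + 1)) * (r ^ (n-1) * (r ^ q * (C - r ^ q) ^ (1/b))) with hGdef
  have hderiv : ∀ r ∈ uIcc (0:ℝ) R,
      HasDerivAt (fun r : ℝ => r ^ n * (C - r ^ q) ^ (1/b + 1)) (G r) r := by
    intro r hr
    rw [uIcc_of_le hR.le] at hr
    have hin : HasDerivAt (fun r : ℝ => C - r ^ q) (-(q * r ^ (q-1))) r := by
      have h := (hasDerivAt_const r C).sub (Real.hasDerivAt_rpow_const (p := q) (Or.inr hq1.le)); rwa [zero_sub] at h
    have hout : HasDerivAt (fun t : ℝ => t ^ (1/b + 1))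
        ((1/b + 1) * (C - r ^ q) ^ (1/b)) (C - r ^ q) := by
      have := Real.hasDerivAt_rpow_const (x := C - r ^ q) (p := 1/b + 1)
        (Or.inr (by linarith))
      rwa [show 1/b + 1 - 1 = 1/b by ring] at this
    have hF := (hasDerivAt_pow n r).mul (hout.comp r hin)
    have hval : (n:ℝ) * r ^ (n-1) * (C - r ^ q) ^ (1/b + 1)
        + r ^ n * ((1/b + 1) * (C - r ^ q) ^ (1/b) * -(q * r ^ (q-1))) = G r := by
      rw [hGdef]
      have hkey : r ^ n * r ^ (q - 1) = r ^ (n-1) * r ^ q := by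
        rcases eq_or_lt_of_le hr.1 with h0 | h0
        · rw [← h0, Real.zero_rpow hq0.ne', zero_pow (by omega), mul_zero, zero_mul]
        · have h2 : r ^ q = r ^ (q-1) * r := by
            rw [← Real.rpow_add_one h0.ne' (q-1)]; ring_nf
          have h3 : r ^ (n-1) * r = r ^ n := by
            rw [← pow_succ]; congr 1; omega
          rw [h2, ← h3]; ring
      linear_combination (-(1/b+1) * (C - r ^ q) ^ (1/b) * q) * hkey
    rw [← hval]
    exact hF
  have hcont1 : Continuous fun r : ℝ => (C - r ^ q) ^ (1/b + 1) :=
    (continuous_const.sub (cont_pow q hq0)).rpow_const fun y => Or.inr (by positivity)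
  have hcont2 : Continuous fun r : ℝ => (C - r ^ q) ^ (1/b) :=
    (continuous_const.sub (cont_pow q hq0)).rpow_const fun y => Or.inr hb1.le
  have hcG : Continuous G :=
    ((continuous_const.mul ((continuous_pow _).mul (continuous_const.mul hcont1))).sub
      (continuous_const.mul ((continuous_pow _).mul ((cont_pow q hq0).mul hcont2))))
  have hint := intervalIntegral.integral_eq_sub_of_hasDerivAt hderiv
    (hcG.intervalIntegrable 0 R)
  rw [show R ^ n * (C - R ^ q) ^ (1/b+1) - 0 ^ n * (C - 0 ^ q) ^ (1/b+1) = 0 by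
      rw [hRq, sub_self, Real.zero_rpow (by positivity : (0:ℝ) < 1/b+1).ne',
        zero_pow (by omega : n ≠ 0)]; ring] at hint
  rw [hGdef] at hint
  have h1 : Continuous fun r : ℝ => (n:ℝ) * (r ^ (n-1) * ((1:ℝ) * (C - r ^ q) ^ (1/b + 1))) :=
    continuous_const.mul ((continuous_pow _).mul (continuous_const.mul hcont1))
  have h2 : Continuous fun r : ℝ => (q * (1/b+1)) * (r ^ (n-1) * (r ^ q * (C - r ^ q) ^ (1/b))) :=
    continuous_const.mul ((continuous_pow _).mul ((cont_pow q hq0).mul hcont2))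
  rw [intervalIntegral.integral_sub (h1.intervalIntegrable 0 R) (h2.intervalIntegrable 0 R),
    intervalIntegral.integral_const_mul, intervalIntegral.integral_const_mul] at hint
  linarith [hint]

theorem radial (n : ℕ) (hn : 1 ≤ n) (f : ℝ → ℝ) :
    ∫ x : EuclideanSpace ℝ (Fin n), f ‖x‖
      = ((n : ℝ) * (volume (ball (0 : EuclideanSpace ℝ (Fin n)) 1)).toReal) *
        ∫ y in Ioi (0:ℝ), y ^ (n-1) * f y := by
  haveI : Nonempty (Fin n) := ⟨⟨0, hn⟩⟩
  haveI : Nontrivial (EuclideanSpace ℝ (Fin n)) := by infer_instance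
  rw [MeasureTheory.integral_fun_norm_addHaar volume f]
  simp only [finrank_euclideanSpace_fin, nsmul_eq_mul, smul_eq_mul]
  rw [measureReal_def]
  ring

theorem stmt9 (n : ℕ) (hn : 1 ≤ n) (p q b γ C : ℝ) (hp : 1 < p) (hq : q = p / (p - 1))
    (hb : 0 < b) (hγ : γ = b + 1 / (p - 1)) (hC : 0 < C)
    (hmass : ∫ x : EuclideanSpace ℝ (Fin n), (max (C - ‖x‖ ^ q) 0) ^ (1 / b) = 1) :
    ((b + 1) / (γ * ∫ x : EuclideanSpace ℝ (Fin n),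
        ((max (C - ‖x‖ ^ q) 0) ^ (1 / b)) ^ (b + 1))) *
      ∫ x : EuclideanSpace ℝ (Fin n),
        ((max (C - ‖x‖ ^ q) 0) ^ (1 / b)) ^ (-1 / (p - 1)) *
          ‖gradient (fun y : EuclideanSpace ℝ (Fin n) =>
            ((max (C - ‖y‖ ^ q) 0) ^ (1 / b)) ^ γ) x‖ ^ p
      = (q * γ / b) ^ (p - 1) * n := by
  have hp1 : 0 < p - 1 := by linarith
  have hq1 : 1 < q := by rw [hq, lt_div_iff₀ hp1]; linarith
  have hq0 : 0 < q := lt_trans one_pos hq1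
  have hγ0 : 0 < γ := by rw [hγ]; positivity
  have hb1 : (0:ℝ) < 1/b := by positivity
  set R : ℝ := C ^ (1/q) with hRdef
  have hR : 0 < R := Real.rpow_pos_of_pos hC _
  have hRq : R ^ q = C := by
    rw [hRdef, ← Real.rpow_mul hC.le, one_div_mul_cancel hq0.ne', Real.rpow_one]
  set ν : ℝ := (n : ℝ) * (volume (Metric.ball (0 : EuclideanSpace ℝ (Fin n)) 1)).toReal with hνdef
  set I0 : ℝ := ∫ y in (0:ℝ)..R, y ^ (n-1) * ((1:ℝ) * (C - y ^ q) ^ (1/b)) with hI0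
  set I1 : ℝ := ∫ y in (0:ℝ)..R, y ^ (n-1) * (y ^ q * (C - y ^ q) ^ (1/b)) with hI1
  set I2 : ℝ := ∫ y in (0:ℝ)..R, y ^ (n-1) * ((1:ℝ) * (C - y ^ q) ^ (1/b + 1)) with hI2
  -- mass
  have hmass' : ν * I0 = 1 := by
    rw [← hmass]
    have : ∀ x : EuclideanSpace ℝ (Fin n), (max (C - ‖x‖ ^ q) 0) ^ (1/b)
        = (fun r : ℝ => 1 * (max (C - r ^ q) 0) ^ (1/b)) ‖x‖ := fun x => by simp
    rw [show (∫ x : EuclideanSpace ℝ (Fin n), (max (C - ‖x‖ ^ q) 0) ^ (1/b)) =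
        ∫ x : EuclideanSpace ℝ (Fin n), (fun r : ℝ => 1 * (max (C - r ^ q) 0) ^ (1/b)) ‖x‖ from
      integral_congr_ae (Filter.Eventually.of_forall fun x => this x)]
    rw [radial n hn (fun r : ℝ => 1 * (max (C - r ^ q) 0) ^ (1/b)), ioi_to_interval n q C hn hq1 hC hb1 continuous_const]
  -- second moment integral
  have hBB : (∫ x : EuclideanSpace ℝ (Fin n), ((max (C - ‖x‖ ^ q) 0) ^ (1/b)) ^ (b+1)) = ν * I2 := by
    have : ∀ x : EuclideanSpace ℝ (Fin n), ((max (C - ‖x‖ ^ q) 0) ^ (1/b)) ^ (b+1)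
        = (fun r : ℝ => 1 * (max (C - r ^ q) 0) ^ (1/b + 1)) ‖x‖ := fun x => by
      simp only [one_mul]
      rw [← Real.rpow_mul (le_max_right _ _)]
      congr 1
      field_simp
      ring
    rw [show (∫ x : EuclideanSpace ℝ (Fin n), ((max (C - ‖x‖ ^ q) 0) ^ (1/b)) ^ (b+1)) =
        ∫ x : EuclideanSpace ℝ (Fin n), (fun r : ℝ => 1 * (max (C - r ^ q) 0) ^ (1/b + 1)) ‖x‖ from
      integral_congr_ae (Filter.Eventually.of_forall fun x => this x)]
    rw [radial n hn (fun r : ℝ => 1 * (max (C - r ^ q) 0) ^ (1/b + 1)), ioi_to_interval n q C hn hq1 hC (by positivity) continuous_const]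
  -- fisher integrand
  have hFisher : (∫ x : EuclideanSpace ℝ (Fin n),
      ((max (C - ‖x‖ ^ q) 0) ^ (1 / b)) ^ (-1 / (p - 1)) *
        ‖gradient (fun y : EuclideanSpace ℝ (Fin n) => ((max (C - ‖y‖ ^ q) 0) ^ (1 / b)) ^ γ) x‖ ^ p)
      = (q * γ / b) ^ p * (ν * I1) := by
    rw [show (∫ x : EuclideanSpace ℝ (Fin n),
        ((max (C - ‖x‖ ^ q) 0) ^ (1 / b)) ^ (-1 / (p - 1)) *
          ‖gradient (fun y : EuclideanSpace ℝ (Fin n) => ((max (C - ‖y‖ ^ q) 0) ^ (1 / b)) ^ γ) x‖ ^ p)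
        = ∫ x : EuclideanSpace ℝ (Fin n), (q * γ / b) ^ p *
            ((fun r : ℝ => r ^ q * (max (C - r ^ q) 0) ^ (1/b)) ‖x‖) from
      integral_congr_ae (Filter.Eventually.of_forall fun x =>
        pointwise_eq p q b γ C hp hq hb hγ x)]
    rw [MeasureTheory.integral_const_mul,
      radial n hn (fun r : ℝ => r ^ q * (max (C - r ^ q) 0) ^ (1/b)),
      ioi_to_interval n q C hn hq1 hC hb1 (cont_pow q hq0)]
  -- relation I1 = C * I0 - I2
  have hcont0 : Continuous fun y : ℝ => (C - y ^ q) ^ (1/b) :=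
    (continuous_const.sub (cont_pow q hq0)).rpow_const fun y => Or.inr hb1.le
  have hcont2 : Continuous fun y : ℝ => (C - y ^ q) ^ (1/b + 1) :=
    (continuous_const.sub (cont_pow q hq0)).rpow_const fun y => Or.inr (by positivity)
  have hrel : I1 = C * I0 - I2 := by
    have hptw : ∀ y ∈ uIcc (0:ℝ) R, y ^ (n-1) * (y ^ q * (C - y ^ q) ^ (1/b))
        = C * (y ^ (n-1) * ((1:ℝ) * (C - y ^ q) ^ (1/b)))
          - y ^ (n-1) * ((1:ℝ) * (C - y ^ q) ^ (1/b + 1)) := by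
      intro y hy
      rw [uIcc_of_le hR.le] at hy
      have hyq : y ^ q ≤ C := by
        rw [← hRq]; exact Real.rpow_le_rpow hy.1 hy.2 hq0.le
      have hplus : (C - y ^ q) ^ (1/b + 1) = (C - y ^ q) ^ (1/b) * (C - y ^ q) :=
        Real.rpow_add_one' (by linarith) (by positivity)
      rw [hplus]; ring
    rw [hI1, intervalIntegral.integral_congr hptw,
      intervalIntegral.integral_sub
        (f := fun y => C * (y ^ (n-1) * ((1:ℝ) * (C - y ^ q) ^ (1/b))))
        (g := fun y => y ^ (n-1) * ((1:ℝ) * (C - y ^ q) ^ (1/b + 1)))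
        ((continuous_const.mul ((continuous_pow _).mul
          (continuous_const.mul hcont0))).intervalIntegrable 0 R)
        (((continuous_pow _).mul (continuous_const.mul hcont2)).intervalIntegrable 0 R),
      intervalIntegral.integral_const_mul]
  -- FTC relation
  have hftc : (n : ℝ) * I2 = (q * (1/b + 1)) * I1 := ftc_id n q b C hn hq1 hb hC
  -- solve the linear system
  have hn0 : (0:ℝ) < n := by exact_mod_cast hn
  have hDpos : (0:ℝ) < (n : ℝ) + q * (1/b + 1) := by positivity
  have h1 : (n:ℝ) * (ν * I2) = (q * (1/b+1)) * (ν * I1) := by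
    calc (n:ℝ) * (ν * I2) = ν * ((n:ℝ) * I2) := by ring
      _ = ν * ((q * (1/b+1)) * I1) := by rw [hftc]
      _ = (q * (1/b+1)) * (ν * I1) := by ring
  have h2 : ν * I1 = C - ν * I2 := by
    calc ν * I1 = C * (ν * I0) - ν * I2 := by rw [hrel]; ring
      _ = C - ν * I2 := by rw [hmass', mul_one]
  rw [h2] at h1
  have hM2 : ν * I2 = q * (1/b + 1) * C / ((n : ℝ) + q * (1/b + 1)) := by
    rw [eq_div_iff hDpos.ne']
    linear_combination h1
  have hM1 : ν * I1 = (n : ℝ) * C / ((n : ℝ) + q * (1/b + 1)) := by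
    rw [h2, hM2, eq_div_iff hDpos.ne']
    field_simp
    ring
  -- final computation
  rw [hBB, hFisher, hM2, hM1]
  have hK : (0:ℝ) < q * γ / b := by positivity
  have hKp : (q * γ / b) ^ p = (q * γ / b) ^ (p - 1) * (q * γ / b) := by
    rw [← Real.rpow_add_one hK.ne' (p - 1)]; ring_nf
  rw [hKp]
  have hb10 : (0:ℝ) < 1/b + 1 := by positivity
  have hKp0 : (0:ℝ) < (q * γ / b) ^ (p - 1) := Real.rpow_pos_of_pos hK _
  field_simp
  ring
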